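/- For Poisson(λ)-distributed i.i.d. variables Y_1,…,Y_n with 0 < λ < log n, combining the MGF bound with the optimal choice of t gives E[max_i Y_i] ≤ (log n − λ) / W((log n − λ)/(eλ)), where W is the Lambert W function (the inverse of x ↦ x e^x on [0,∞)). -/

import Mathlib

open MeasureTheory ProbabilityTheory Finset

lemma tsum_poisson_exp (lam t : ℝ) (hlam : 0 < lam) :
    ∑' k : ℕ, Real.exp (t * k) * (Real.exp (-lam) * lam ^ k / (Nat.factorial k)) =
      Real.exp (lam * (Real.exp t - 1)) := by
  have hterm : ∀ k : ℕ, Real.exp (t * k) * (Real.exp (-lam) * lam ^ k / (Nat.factorial k))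
      = Real.exp (-lam) * ((lam * Real.exp t) ^ k / (Nat.factorial k)) := by
    intro k
    have : Real.exp (t * k) = Real.exp t ^ k := by
      rw [mul_comm, Real.exp_nat_mul]
    rw [this, mul_pow]
    ring
  rw [tsum_congr hterm, tsum_mul_left]
  have hsum : ∑' k : ℕ, ((lam * Real.exp t) ^ k / (Nat.factorial k) : ℝ)
      = Real.exp (lam * Real.exp t) := by
    rw [Real.exp_eq_exp_ℝ, NormedSpace.exp_eq_tsum_div]
  rw [hsum, ← Real.exp_add]
  ring_nf

lemma summable_poisson_exp (lam t : ℝ) :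
    Summable (fun k : ℕ =>
      Real.exp (t * k) * (Real.exp (-lam) * lam ^ k / (Nat.factorial k))) := by
  have hterm : ∀ k : ℕ, Real.exp (t * k) * (Real.exp (-lam) * lam ^ k / (Nat.factorial k))
      = Real.exp (-lam) * ((lam * Real.exp t) ^ k / (Nat.factorial k)) := by
    intro k
    have : Real.exp (t * k) = Real.exp t ^ k := by
      rw [mul_comm, Real.exp_nat_mul]
    rw [this, mul_pow]
    ring
  simp_rw [hterm]
  exact (Real.summable_pow_div_factorial (lam * Real.exp t)).mul_left _

/-- For i.i.d. `Poisson(λ)` variables `Y_1, …, Y_n` with `0 < λ < log n`,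
combining the MGF bound with the optimal choice of `t` gives
`E[max_i Y_i] ≤ (log n − λ) / W((log n − λ)/(eλ))`, where `W` is the Lambert W
function, i.e. the inverse of `x ↦ x e^x` on `[0,∞)`. -/
theorem expected_max_poisson_le_lambertW_bound
    {Ω : Type*} [MeasurableSpace Ω] (μ : Measure Ω) [IsProbabilityMeasure μ]
    (n : ℕ) (hn : 0 < n) (Y : Fin n → Ω → ℕ)
    (hmeas : ∀ i, Measurable (Y i))
    (hindep : iIndepFun Y μ)
    (lam : ℝ) (hlam : 0 < lam) (hlamlt : lam < Real.log n)
    (hpois : ∀ i (k : ℕ),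
      (μ {ω | Y i ω = k}).toReal = Real.exp (-lam) * lam ^ k / (Nat.factorial k))
    (hmaxint : Integrable (fun ω => (univ.sup' (univ_nonempty_iff.mpr ⟨⟨0, hn⟩⟩)
      fun i => (Y i ω : ℝ))) μ)
    (W : ℝ → ℝ) (hW : ∀ y, 0 ≤ y → 0 ≤ W y ∧ W y * Real.exp (W y) = y) :
    (∫ ω, (univ.sup' (univ_nonempty_iff.mpr ⟨⟨0, hn⟩⟩) fun i => (Y i ω : ℝ)) ∂μ) ≤
      (Real.log n - lam) / W ((Real.log n - lam) / (Real.exp 1 * lam)) := by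
  -- set up the Lambert W value
  set c : ℝ := (Real.log n - lam) / (Real.exp 1 * lam) with hc
  have hc_pos : 0 < c :=
    div_pos (by linarith) (mul_pos (Real.exp_pos 1) hlam)
  obtain ⟨hw_nonneg, hw_eq⟩ := hW c hc_pos.le
  set w : ℝ := W c with hwdef
  have hw_pos : 0 < w := by
    rcases lt_or_eq_of_le hw_nonneg with h | h
    · exact h
    · exfalso; rw [← h] at hw_eq; simp at hw_eq; linarith
  set t : ℝ := 1 + w with ht
  have ht_pos : 0 < t := by positivity
  -- the key exponential moment identity
  set K : ℝ := Real.exp (lam * (Real.exp t - 1)) with hK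
  have hexp_meas : ∀ i, Measurable (fun ω => Real.exp (t * (Y i ω : ℝ))) := by
    intro i
    exact Real.measurable_exp.comp
      (measurable_const.mul ((measurable_from_nat (f := fun k : ℕ => (k : ℝ))).comp (hmeas i)))
  have hlint : ∀ i, ∫⁻ ω, ENNReal.ofReal (Real.exp (t * (Y i ω : ℝ))) ∂μ
      = ENNReal.ofReal K := by
    intro i
    have hg : Measurable (fun k : ℕ => ENNReal.ofReal (Real.exp (t * (k : ℝ)))) :=
      measurable_from_nat
    rw [← lintegral_map hg (hmeas i), lintegral_countable']
    have hterm : ∀ k : ℕ,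
        ENNReal.ofReal (Real.exp (t * (k : ℝ))) * (μ.map (Y i)) {k}
          = ENNReal.ofReal
              (Real.exp (t * k) * (Real.exp (-lam) * lam ^ k / (Nat.factorial k))) := by
      intro k
      have hset : (Y i) ⁻¹' {k} = {ω | Y i ω = k} := rfl
      have hmk : (μ.map (Y i)) {k}
          = ENNReal.ofReal (Real.exp (-lam) * lam ^ k / (Nat.factorial k)) := by
        rw [Measure.map_apply (hmeas i) (measurableSet_singleton k), hset,
          ← hpois i k, ENNReal.ofReal_toReal (measure_ne_top μ _)]
      rw [hmk, ← ENNReal.ofReal_mul (Real.exp_nonneg _)]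
    have := fun k => hterm k
    calc ∑' k : ℕ, ENNReal.ofReal (Real.exp (t * (k : ℝ))) * (μ.map (Y i)) {k}
        = ∑' k : ℕ, ENNReal.ofReal
            (Real.exp (t * k) * (Real.exp (-lam) * lam ^ k / (Nat.factorial k))) := by
          exact tsum_congr hterm
      _ = ENNReal.ofReal K := by
          rw [← ENNReal.ofReal_tsum_of_nonneg (fun k => by positivity)
            (summable_poisson_exp lam t), tsum_poisson_exp lam t hlam]
  -- integrability of each exponential
  have hexp_int : ∀ i, Integrable (fun ω => Real.exp (t * (Y i ω : ℝ))) μ := by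
    intro i
    refine ⟨(hexp_meas i).aestronglyMeasurable, ?_⟩
    rw [hasFiniteIntegral_iff_ofReal (ae_of_all _ fun ω => (Real.exp_nonneg _))]
    rw [hlint i]
    exact ENNReal.ofReal_lt_top
  have hexp_integral : ∀ i, ∫ ω, Real.exp (t * (Y i ω : ℝ)) ∂μ = K := by
    intro i
    rw [integral_eq_lintegral_of_nonneg_ae (ae_of_all _ fun ω => (Real.exp_nonneg _))
      (hexp_meas i).aestronglyMeasurable, hlint i,
      ENNReal.toReal_ofReal (Real.exp_nonneg _)]
  -- the max
  set ne : (univ : Finset (Fin n)).Nonempty := univ_nonempty_iff.mpr ⟨⟨0, hn⟩⟩ with hne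
  set M : Ω → ℝ := fun ω => univ.sup' ne fun i => (Y i ω : ℝ) with hM
  have hM_meas : Measurable M := by
    have := Finset.measurable_sup' ne (f := fun i => fun ω => ((Y i ω : ℝ)))
      (fun i _ => (measurable_from_nat (f := fun k : ℕ => (k : ℝ))).comp (hmeas i))
    have heq : M = univ.sup' ne (fun i => fun ω => ((Y i ω : ℝ))) := by
      ext ω
      exact (Finset.sup'_apply (C := fun _ : Ω => ℝ) ne (fun i => fun ω => ((Y i ω : ℝ))) ω).symm
    rw [heq]
    exact this
  -- pointwise domination
  have hdom : ∀ ω, Real.exp (t * M ω) ≤ ∑ i, Real.exp (t * (Y i ω : ℝ)) := by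
    intro ω
    obtain ⟨i₀, _, hi₀⟩ := Finset.exists_mem_eq_sup' ne fun i => (Y i ω : ℝ)
    have : M ω = (Y i₀ ω : ℝ) := hi₀
    rw [this]
    exact Finset.single_le_sum (f := fun i => Real.exp (t * (Y i ω : ℝ)))
      (fun i _ => (Real.exp_nonneg _)) (mem_univ i₀)
  have hsum_int : Integrable (fun ω => ∑ i, Real.exp (t * (Y i ω : ℝ))) μ :=
    integrable_finset_sum _ fun i _ => hexp_int i
  have hexpM_int : Integrable (fun ω => Real.exp (t * M ω)) μ := by
    refine hsum_int.mono
      (Real.measurable_exp.comp (measurable_const.mul hM_meas)).aestronglyMeasurable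
      (ae_of_all _ fun ω => ?_)
    rw [Real.norm_eq_abs, Real.norm_eq_abs, abs_of_nonneg (Real.exp_nonneg _),
      abs_of_nonneg (Finset.sum_nonneg fun i _ => Real.exp_nonneg _)]
    exact hdom ω
  -- Jensen's inequality
  have hjensen : Real.exp (t * ∫ ω, M ω ∂μ) ≤ ∫ ω, Real.exp (t * M ω) ∂μ := by
    have := convexOn_exp.map_integral_le (μ := μ) (f := fun ω => t * M ω)
      Real.continuous_exp.continuousOn isClosed_univ
      (ae_of_all _ fun ω => Set.mem_univ _) (hmaxint.const_mul t) ?_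
    · rwa [integral_const_mul] at this
    · exact hexpM_int
  -- sum bound
  have hsumbound : ∫ ω, Real.exp (t * M ω) ∂μ ≤ n * K := by
    calc ∫ ω, Real.exp (t * M ω) ∂μ
        ≤ ∫ ω, ∑ i, Real.exp (t * (Y i ω : ℝ)) ∂μ :=
          integral_mono hexpM_int hsum_int hdom
      _ = ∑ i : Fin n, ∫ ω, Real.exp (t * (Y i ω : ℝ)) ∂μ :=
          integral_finset_sum _ fun i _ => hexp_int i
      _ = n * K := by
          simp only [hexp_integral, Finset.sum_const, card_univ, Fintype.card_fin,
            nsmul_eq_mul]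
  -- deduce the MGF bound
  have hnK_pos : (0 : ℝ) < n * K := by
    have : (0 : ℝ) < n := by exact_mod_cast hn
    positivity
  have hlog : t * ∫ ω, M ω ∂μ ≤ Real.log n + lam * (Real.exp t - 1) := by
    have h1 : Real.exp (t * ∫ ω, M ω ∂μ) ≤ n * K := le_trans hjensen hsumbound
    have h2 : t * ∫ ω, M ω ∂μ ≤ Real.log (n * K) :=
      (Real.le_log_iff_exp_le hnK_pos).mpr h1
    have h3 : Real.log ((n : ℝ) * K) = Real.log n + lam * (Real.exp t - 1) := by
      rw [hK, Real.log_mul (by exact_mod_cast hn.ne') (Real.exp_ne_zero _), Real.log_exp]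
    rwa [h3] at h2
  -- final algebra
  have hEM : ∫ ω, M ω ∂μ ≤ (Real.log n + lam * (Real.exp t - 1)) / t :=
    (le_div_iff₀' ht_pos).mpr hlog
  have hexpw : Real.exp w = c / w := by
    field_simp at hw_eq ⊢
    linarith [hw_eq]
  have hexpt : Real.exp t = Real.exp 1 * (c / w) := by
    rw [ht, Real.exp_add, hexpw]
  have hkey : (Real.log n + lam * (Real.exp t - 1)) / t
      = (Real.log n - lam) / w := by
    have hclam : Real.exp 1 * lam * c = Real.log n - lam := by
      rw [hc]
      field_simp
    rw [hexpt]
    have h1 : lam * (Real.exp 1 * (c / w) - 1) = (Real.log n - lam) / w - lam := by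
      rw [← hclam]
      field_simp
    rw [h1, ht]
    field_simp
    ring
  calc (∫ ω, M ω ∂μ) ≤ (Real.log n + lam * (Real.exp t - 1)) / t := hEM
    _ = (Real.log n - lam) / w := hkey
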